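/- arXiv:1405.0595 — 2 statements merged into one kernel-verified Lean document; each statement's English description precedes it below -/
import Mathlib

section
/- Let X₁, …, Xₙ be independent standard normal random variables, S₁, …, Sₙ nonnegative random variables independent of the Xᵢ, and λ₁, …, λₙ ∈ ℝ. Then Σᵢ λᵢ√(Sᵢ)Xᵢ has the same distribution as X₁·√(Σᵢ λᵢ²Sᵢ). -/
open MeasureTheory ProbabilityTheory Filter
open scoped Topology

open MeasureTheory ProbabilityTheory Filter Real
open scoped Topology ENNReal NNReal

noncomputable section

namespace ScaledGaussianAux


lemma map_withDensity_comp {α β : Type*} [MeasurableSpace α] [MeasurableSpace β]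
    (μ : Measure α) {f : α → β} (hf : Measurable f) {D : β → ℝ≥0∞} (hD : Measurable D) :
    (μ.withDensity (fun a => D (f a))).map f = (μ.map f).withDensity D := by
  ext s hs
  rw [Measure.map_apply hf hs, withDensity_apply _ (hf hs), withDensity_apply _ hs,
    setLIntegral_map hs hD hf]

lemma gg_prod : (gaussianReal 0 1).prod (gaussianReal 0 1)
    = (volume.prod volume).withDensity
      (fun p : ℝ × ℝ => gaussianPDF 0 1 p.1 * gaussianPDF 0 1 p.2) := by
  refine Measure.prod_eq fun s t hs ht => ?_
  rw [withDensity_apply _ (hs.prod ht), ← Measure.prod_restrict,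
    lintegral_prod_mul (measurable_gaussianPDF 0 1).aemeasurable
      (measurable_gaussianPDF 0 1).aemeasurable]
  rw [gaussianReal_of_var_ne_zero 0 one_ne_zero, withDensity_apply _ hs, withDensity_apply _ ht]

lemma measurable_rot (c s : ℝ) :
    Measurable (fun p : ℝ × ℝ => (c * p.1 + s * p.2, -s * p.1 + c * p.2)) := by
  fun_prop

lemma volume_prod_map_rot (c s : ℝ) (h : c ^ 2 + s ^ 2 = 1) :
    (volume.prod volume : Measure (ℝ × ℝ)).map
      (fun p : ℝ × ℝ => (c * p.1 + s * p.2, -s * p.1 + c * p.2)) = volume.prod volume := by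
  classical
  set M : Matrix (Fin 2) (Fin 2) ℝ := !![c, s; -s, c] with hM
  have hdet : M.det = 1 := by
    simp only [hM, Matrix.det_fin_two_of]
    nlinarith [h]
  have h1 : (volume : Measure (Fin 2 → ℝ)).map (Matrix.toLin' M) = volume := by
    rw [Real.map_matrix_volume_pi_eq_smul_volume_pi (by rw [hdet]; norm_num)]
    simp [hdet]
  have hF := volume_preserving_finTwoArrow ℝ
  have hcomp : (fun p : ℝ × ℝ => (c * p.1 + s * p.2, -s * p.1 + c * p.2)) ∘
      (MeasurableEquiv.finTwoArrow : (Fin 2 → ℝ) ≃ᵐ ℝ × ℝ)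
      = (MeasurableEquiv.finTwoArrow : (Fin 2 → ℝ) ≃ᵐ ℝ × ℝ) ∘ (Matrix.toLin' M) := by
    funext x
    simp [MeasurableEquiv.finTwoArrow, Matrix.toLin'_apply, Matrix.mulVec, dotProduct,
      Fin.sum_univ_two, Matrix.vecHead, Matrix.vecTail, hM, Function.comp]
  have hvol : (volume.prod volume : Measure (ℝ × ℝ))
      = (volume : Measure (Fin 2 → ℝ)).map MeasurableEquiv.finTwoArrow := hF.map_eq.symm
  rw [hvol, Measure.map_map (measurable_rot c s) (MeasurableEquiv.measurable _), hcomp,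
    ← Measure.map_map (MeasurableEquiv.measurable _)
      (Matrix.toLin' M).continuous_of_finiteDimensional.measurable,
    h1]

lemma gaussianPDF_rot (c s : ℝ) (h : c ^ 2 + s ^ 2 = 1) (x y : ℝ) :
    gaussianPDF 0 1 (c * x + s * y) * gaussianPDF 0 1 (-s * x + c * y)
      = gaussianPDF 0 1 x * gaussianPDF 0 1 y := by
  simp only [gaussianPDF]
  rw [← ENNReal.ofReal_mul (gaussianPDFReal_nonneg _ _ _),
    ← ENNReal.ofReal_mul (gaussianPDFReal_nonneg _ _ _)]
  congr 1
  simp only [gaussianPDFReal, NNReal.coe_one, mul_one, sub_zero]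
  rw [mul_mul_mul_comm, ← Real.exp_add, mul_mul_mul_comm, ← Real.exp_add]
  congr 1
  have : (c * x + s * y) ^ 2 + (-s * x + c * y) ^ 2 = x ^ 2 + y ^ 2 := by nlinarith [h]
  field_simp
  congr 1
  nlinarith [this]

lemma measurable_ggD : Measurable (fun p : ℝ × ℝ => gaussianPDF 0 1 p.1 * gaussianPDF 0 1 p.2) :=
  ((measurable_gaussianPDF 0 1).comp measurable_fst).mul
    ((measurable_gaussianPDF 0 1).comp measurable_snd)

lemma gg_map_rot (c s : ℝ) (h : c ^ 2 + s ^ 2 = 1) :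
    ((gaussianReal 0 1).prod (gaussianReal 0 1)).map
      (fun p : ℝ × ℝ => (c * p.1 + s * p.2, -s * p.1 + c * p.2))
      = (gaussianReal 0 1).prod (gaussianReal 0 1) := by
  set D : ℝ × ℝ → ℝ≥0∞ := fun p => gaussianPDF 0 1 p.1 * gaussianPDF 0 1 p.2 with hD
  set rot : ℝ × ℝ → ℝ × ℝ := fun p => (c * p.1 + s * p.2, -s * p.1 + c * p.2) with hrot
  have hDrot : (fun p : ℝ × ℝ => D (rot p)) = D := by
    funext p
    simp only [hD, hrot]
    exact gaussianPDF_rot c s h p.1 p.2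
  rw [gg_prod]
  show ((volume.prod volume).withDensity D).map rot = (volume.prod volume).withDensity D
  conv_lhs => rw [← hDrot]
  rw [ map_withDensity_comp _ (measurable_rot c s) measurable_ggD,
    volume_prod_map_rot c s h]

lemma gg_map_linear (a b : ℝ) :
    ((gaussianReal 0 1).prod (gaussianReal 0 1)).map (fun p : ℝ × ℝ => a * p.1 + b * p.2)
      = gaussianReal 0 ⟨a ^ 2 + b ^ 2, by positivity⟩ := by
  rcases eq_or_ne (a ^ 2 + b ^ 2) 0 with h0 | h0
  · have ha : a = 0 := by nlinarith [sq_nonneg a, sq_nonneg b]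
    have hb : b = 0 := by nlinarith [sq_nonneg a, sq_nonneg b]
    have hv : (⟨a ^ 2 + b ^ 2, by positivity⟩ : NNReal) = (0 : NNReal) := by
      ext; simp [ha, hb]
    rw [hv, gaussianReal_zero_var, ha, hb]
    simp only [zero_mul, add_zero]
    rw [Measure.map_const, measure_univ, one_smul]
  · set r := Real.sqrt (a ^ 2 + b ^ 2) with hrdef
    have hrpos : 0 < r := Real.sqrt_pos.2 (lt_of_le_of_ne (by positivity) (Ne.symm h0))
    have hr2 : r ^ 2 = a ^ 2 + b ^ 2 := Real.sq_sqrt (by positivity)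
    have hcs : (a / r) ^ 2 + (b / r) ^ 2 = 1 := by
      field_simp
      linarith [hr2]
    have key : (fun p : ℝ × ℝ => a * p.1 + b * p.2)
        = (fun t => r * t) ∘ Prod.fst ∘
          (fun p : ℝ × ℝ => ((a / r) * p.1 + (b / r) * p.2,
            -(b / r) * p.1 + (a / r) * p.2)) := by
      funext p
      simp only [Function.comp]
      field_simp
    rw [key, ← Function.comp_assoc, ← Measure.map_map
      ((measurable_const_mul r).comp measurable_fst) (measurable_rot _ _),
      gg_map_rot _ _ hcs, ← Measure.map_map (measurable_const_mul r) measurable_fst,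
      Measure.map_fst_prod, measure_univ, one_smul, gaussianReal_map_const_mul]
    rw [mul_zero, mul_one]
    congr 1
    ext
    exact hr2

lemma pi_map_sum : ∀ (n : ℕ) (c : Fin n → ℝ),
    (Measure.pi fun _ : Fin n => gaussianReal 0 1).map (fun x => ∑ i, c i * x i)
      = gaussianReal 0 ⟨∑ i, c i ^ 2, by positivity⟩ := by
  intro n
  induction n with
  | zero =>
    intro c
    have h1 : (fun x : Fin 0 → ℝ => ∑ i, c i * x i) = fun _ => (0 : ℝ) := by
      funext x; simp
    have hv : (⟨∑ i, c i ^ 2, by positivity⟩ : NNReal) = (0 : NNReal) := by ext; simp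
    rw [h1, hv, gaussianReal_zero_var, Measure.map_const, measure_univ, one_smul]
  | succ n ih =>
    intro c
    set e := MeasurableEquiv.piFinSuccAbove (fun _ : Fin (n + 1) => ℝ) 0 with he
    set T : (Fin n → ℝ) → ℝ := fun y => ∑ i, c i.succ * y i with hT
    have hTmeas : Measurable T := by
      apply Finset.measurable_sum
      intro i _
      exact (measurable_pi_apply i).const_mul _
    have hfe : (fun x : Fin (n + 1) → ℝ => ∑ i, c i * x i)
        = (fun p : ℝ × (Fin n → ℝ) => c 0 * p.1 + T p.2) ∘ e := by
      funext x
      simp only [Function.comp_apply, he, hT, MeasurableEquiv.piFinSuccAbove_apply,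
        Fin.insertNthEquiv, Equiv.coe_fn_symm_mk, Fin.succAbove_zero]
      rw [Fin.sum_univ_succ]
      simp [Fin.removeNth]
    have hf2 : Measurable (fun p : ℝ × (Fin n → ℝ) => c 0 * p.1 + T p.2) :=
      (measurable_fst.const_mul _).add (hTmeas.comp measurable_snd)
    have hmp := measurePreserving_piFinSuccAbove
      (fun _ : Fin (n + 1) => gaussianReal 0 1) 0
    rw [hfe, ← Measure.map_map hf2 e.measurable, hmp.map_eq]
    -- now on the product
    set w : ℝ := ∑ i : Fin n, c i.succ ^ 2 with hw
    have hw0 : 0 ≤ w := by positivity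
    have hTlaw : (Measure.pi fun _ : Fin n => gaussianReal 0 1).map T
        = gaussianReal 0 ⟨w, hw0⟩ := ih _
    have hsplit : (fun p : ℝ × (Fin n → ℝ) => c 0 * p.1 + T p.2)
        = (fun q : ℝ × ℝ => c 0 * q.1 + q.2) ∘ (Prod.map id T) := by
      funext p; rfl
    have hq : Measurable (fun q : ℝ × ℝ => c 0 * q.1 + q.2) := by fun_prop
    rw [hsplit, ← Measure.map_map hq (measurable_id.prodMap hTmeas),
      ← Measure.map_prod_map _ _ measurable_id hTmeas, Measure.map_id, hTlaw]
    -- replace gaussian 0 w by scaled standard gaussian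
    have hscale : (gaussianReal 0 1).map (fun t => Real.sqrt w * t)
        = gaussianReal 0 ⟨w, hw0⟩ := by
      rw [show (fun t => Real.sqrt w * t) = (Real.sqrt w * ·) from rfl,
        gaussianReal_map_const_mul]
      rw [mul_zero, mul_one]
      congr 1
      ext
      exact Real.sq_sqrt hw0
    have hpm : (gaussianReal 0 1).prod ((gaussianReal 0 1).map (fun t => Real.sqrt w * t))
        = ((gaussianReal 0 1).prod (gaussianReal 0 1)).map
            (Prod.map id (fun t => Real.sqrt w * t)) := by
      rw [← Measure.map_prod_map _ _ measurable_id (measurable_const_mul _), Measure.map_id]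
    rw [← hscale, hpm,
      Measure.map_map hq (measurable_id.prodMap (measurable_const_mul _))]
    have hcomp2 : (fun q : ℝ × ℝ => c 0 * q.1 + q.2) ∘ (Prod.map id (Real.sqrt w * ·))
        = fun q : ℝ × ℝ => c 0 * q.1 + Real.sqrt w * q.2 := by
      funext q; rfl
    rw [hcomp2, gg_map_linear]
    congr 1
    ext
    change c 0 ^ 2 + Real.sqrt w ^ 2 = ∑ i, c i ^ 2
    rw [Real.sq_sqrt hw0, Fin.sum_univ_succ, hw]

lemma map_pi_eq {Ω : Type*} [MeasurableSpace Ω] (μ : Measure Ω) [IsProbabilityMeasure μ] {n : ℕ}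
    (X : Fin n → Ω → ℝ) (hmX : ∀ i, Measurable (X i))
    (hgauss : ∀ i, μ.map (X i) = gaussianReal 0 1)
    (hindX : iIndepFun X μ) :
    μ.map (fun ω => fun i => X i ω) = Measure.pi (fun _ : Fin n => gaussianReal 0 1) := by
  refine (Measure.pi_eq (μ := fun _ : Fin n => gaussianReal 0 1) fun s hs => ?_).symm
  rw [Measure.map_apply (measurable_pi_lambda _ hmX) (MeasurableSet.univ_pi hs)]
  have hpre : (fun ω => fun i => X i ω) ⁻¹' (Set.univ.pi s) = ⋂ i, X i ⁻¹' s i := by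
    ext ω; simp [Set.mem_pi]
  rw [hpre]
  have h1 := hindX.measure_inter_preimage_eq_mul (S := Finset.univ) (sets := s)
    (fun i _ => hs i)
  rw [show (⋂ i, X i ⁻¹' s i) = ⋂ i ∈ Finset.univ, X i ⁻¹' s i by simp, h1]
  refine Finset.prod_congr rfl fun i _ => ?_
  rw [← hgauss i, Measure.map_apply (hmX i) (hs i)]

theorem main_result {Ω : Type*} [MeasurableSpace Ω] (μ : Measure Ω)
    [IsProbabilityMeasure μ] (n : ℕ) (hn : 0 < n)
    (X : Fin n → Ω → ℝ) (S : Fin n → Ω → ℝ)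
    (hmX : ∀ i, Measurable (X i)) (hmS : ∀ i, Measurable (S i))
    (hS0 : ∀ i, ∀ ω, 0 ≤ S i ω)
    (hgauss : ∀ i, μ.map (X i) = gaussianReal 0 1)
    (hindX : iIndepFun X μ)
    (hindSX : IndepFun (fun ω => fun i => S i ω) (fun ω => fun i => X i ω) μ)
    (lam : Fin n → ℝ) :
    μ.map (fun ω => ∑ i, lam i * Real.sqrt (S i ω) * X i ω) =
      μ.map (fun ω => X ⟨0, hn⟩ ω * Real.sqrt (∑ i, lam i ^ 2 * S i ω)) := by
  set SS : Ω → (Fin n → ℝ) := fun ω => fun i => S i ω with hSS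
  set XX : Ω → (Fin n → ℝ) := fun ω => fun i => X i ω with hXX
  have hmSS : Measurable SS := measurable_pi_lambda _ hmS
  have hmXX : Measurable XX := measurable_pi_lambda _ hmX
  have hjoint : μ.map (fun ω => (SS ω, XX ω)) = (μ.map SS).prod (μ.map XX) :=
    (indepFun_iff_map_prod_eq_prod_map_map hmSS.aemeasurable hmXX.aemeasurable).1 hindSX
  have hXpi : μ.map XX = Measure.pi (fun _ : Fin n => gaussianReal 0 1) :=
    map_pi_eq μ X hmX hgauss hindX
  set F : (Fin n → ℝ) × (Fin n → ℝ) → ℝ :=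
    fun p => ∑ i, lam i * Real.sqrt (p.1 i) * p.2 i with hFdef
  set G : (Fin n → ℝ) × (Fin n → ℝ) → ℝ :=
    fun p => p.2 ⟨0, hn⟩ * Real.sqrt (∑ i, lam i ^ 2 * p.1 i) with hGdef
  have hF : Measurable F := by
    apply Finset.measurable_sum
    intro i _
    exact ((((measurable_pi_apply i).comp measurable_fst).sqrt.const_mul _).mul
      ((measurable_pi_apply i).comp measurable_snd))
  have hG : Measurable G := by
    apply Measurable.mul
    · exact (measurable_pi_apply _).comp measurable_snd
    · apply Measurable.sqrt
      apply Finset.measurable_sum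
      intro i _
      exact ((measurable_pi_apply i).comp measurable_fst).const_mul _
  have hpair : Measurable (fun ω => (SS ω, XX ω)) := hmSS.prodMk hmXX
  have hLHS : (fun ω => ∑ i, lam i * Real.sqrt (S i ω) * X i ω)
      = F ∘ (fun ω => (SS ω, XX ω)) := rfl
  have hRHS : (fun ω => X ⟨0, hn⟩ ω * Real.sqrt (∑ i, lam i ^ 2 * S i ω))
      = G ∘ (fun ω => (SS ω, XX ω)) := rfl
  rw [hLHS, hRHS, ← Measure.map_map hF hpair, ← Measure.map_map hG hpair, hjoint, hXpi]
  set ν := μ.map SS with hν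
  have hνprob : IsProbabilityMeasure ν := Measure.isProbabilityMeasure_map hmSS.aemeasurable
  set pm := Measure.pi (fun _ : Fin n => gaussianReal 0 1) with hpm
  ext A hA
  rw [Measure.map_apply hF hA, Measure.map_apply hG hA,
    Measure.prod_apply (hF hA), Measure.prod_apply (hG hA)]
  refine lintegral_congr_ae ?_
  have hae : ∀ᵐ s ∂ν, ∀ i, 0 ≤ s i := by
    have hmeasset : MeasurableSet {s : Fin n → ℝ | ∀ i, 0 ≤ s i} := by
      have hset : {s : Fin n → ℝ | ∀ i, 0 ≤ s i}
          = Set.univ.pi fun _ : Fin n => Set.Ici (0 : ℝ) := by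
        ext y; simp [Set.mem_pi, Pi.le_def]
      rw [hset]
      exact MeasurableSet.univ_pi fun _ => measurableSet_Ici
    rw [hν, ae_map_iff hmSS.aemeasurable hmeasset]
    exact ae_of_all _ fun ω i => hS0 i ω
  filter_upwards [hae] with s hs
  -- both sections have the same gaussian law
  have hFs : Measurable (fun x : Fin n → ℝ => F (s, x)) := by
    apply Finset.measurable_sum
    intro i _
    exact Measurable.const_mul (f := fun x : Fin n → ℝ => x i) (measurable_pi_apply i)
      (lam i * Real.sqrt (s i))
  have hGs : Measurable (fun x : Fin n → ℝ => G (s, x)) :=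
    Measurable.mul_const (f := fun x : Fin n → ℝ => x ⟨0, hn⟩)
      (measurable_pi_apply _) (Real.sqrt (∑ i, lam i ^ 2 * s i))
  have hFsum : (fun x : Fin n → ℝ => F (s, x))
      = fun x => ∑ i, (lam i * Real.sqrt (s i)) * x i := rfl
  set r : ℝ := Real.sqrt (∑ k, lam k ^ 2 * s k) with hrdef
  have hvar : ∀ i, (lam i * Real.sqrt (s i)) ^ 2 = lam i ^ 2 * s i := by
    intro i
    rw [mul_pow, Real.sq_sqrt (hs i)]
  have hsum0 : 0 ≤ ∑ k, lam k ^ 2 * s k :=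
    Finset.sum_nonneg fun k _ => mul_nonneg (sq_nonneg _) (hs k)
  have hGsum : (fun x : Fin n → ℝ => G (s, x))
      = fun x => ∑ i, (fun j => if j = (⟨0, hn⟩ : Fin n) then r else 0) i * x i := by
    funext x
    simp only [ite_mul, zero_mul, Finset.sum_ite_eq', Finset.mem_univ, if_true]
    exact mul_comm _ _
  have key : pm.map (fun x => F (s, x)) = pm.map (fun x => G (s, x)) := by
    rw [hFsum, hGsum, hpm, pi_map_sum, pi_map_sum]
    have e1 : ∑ i, (lam i * Real.sqrt (s i)) ^ 2 = ∑ i, lam i ^ 2 * s i :=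
      Finset.sum_congr rfl fun i _ => hvar i
    have e2 : (∑ i, ((fun j => if j = (⟨0, hn⟩ : Fin n) then r else 0) i) ^ 2)
        = ∑ i, lam i ^ 2 * s i := by
      have hsq : ∀ i : Fin n, ((if i = (⟨0, hn⟩ : Fin n) then r else 0)) ^ 2
          = if i = (⟨0, hn⟩ : Fin n) then r ^ 2 else 0 := by
        intro i; split <;> simp
      simp only [hsq, Finset.sum_ite_eq', Finset.mem_univ, if_true]
      rw [hrdef, Real.sq_sqrt hsum0]
    congr 1
    ext
    change ∑ i, (lam i * Real.sqrt (s i)) ^ 2 = ∑ i, (if i = (⟨0, hn⟩ : Fin n) then r else 0) ^ 2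
    rw [e1, ← e2]
  calc pm (Prod.mk s ⁻¹' (F ⁻¹' A)) = (pm.map (fun x => F (s, x))) A := by
        rw [Measure.map_apply hFs hA]; rfl
    _ = (pm.map (fun x => G (s, x))) A := by rw [key]
    _ = pm (Prod.mk s ⁻¹' (G ⁻¹' A)) := by rw [Measure.map_apply hGs hA]; rfl

end ScaledGaussianAux

/-- Randomly scaled Gaussian portfolio identity: Σᵢ λᵢ√(Sᵢ)Xᵢ has the same distribution as
X₁·√(Σᵢ λᵢ²Sᵢ). -/
theorem scaled_gaussian_portfolio_eq_dist {Ω : Type*} [MeasurableSpace Ω] (μ : Measure Ω)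
    [IsProbabilityMeasure μ] (n : ℕ) (hn : 0 < n)
    (X : Fin n → Ω → ℝ) (S : Fin n → Ω → ℝ)
    (hmX : ∀ i, Measurable (X i)) (hmS : ∀ i, Measurable (S i))
    (hS0 : ∀ i, ∀ ω, 0 ≤ S i ω)
    (hgauss : ∀ i, μ.map (X i) = gaussianReal 0 1)
    (hindX : iIndepFun X μ)
    (hindSX : IndepFun (fun ω => fun i => S i ω) (fun ω => fun i => X i ω) μ)
    (lam : Fin n → ℝ) :
    μ.map (fun ω => ∑ i, lam i * Real.sqrt (S i ω) * X i ω) =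
      μ.map (fun ω => X ⟨0, hn⟩ ω * Real.sqrt (∑ i, lam i ^ 2 * S i ω)) :=
  ScaledGaussianAux.main_result μ n hn X S hmX hmS hS0 hgauss hindX hindSX lam
end
end

section
/- Let X₁, X₂ be independent random variables with P(Xᵢ > u) ∼ Lᵢ(u)u^{αᵢ}exp(−u²/(2pᵢ²)) as u → ∞, where p₁ ≤ p₂ and p₁² + p₂² = 1. Set c = 1.1. Then for every ε > 0, P(X₁ + X₂ > x, X₂ ≤ (1 − c p₁)x) = O(x^{α₁+ε} exp(−c²x²/2)) and P(X₁ + X₂ > x, X₂ > c p₂ x) = O(x^{α₂+ε} exp(−c²x²/2)) as x → ∞. -/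
open MeasureTheory ProbabilityTheory Filter Asymptotics
open scoped Topology

section Helpers
open Set

private lemma my_uct (h : ℝ → ℝ) (hmeas : Measurable h)
    (hconv : ∀ s : ℝ, Tendsto (fun x => h (x + s) - h x) atTop (𝓝 0)) :
    ∀ δ > (0:ℝ), ∃ N : ℝ, ∀ x ≥ N, ∀ s ∈ Set.Icc (0:ℝ) 1, |h (x + s) - h x| ≤ δ := by
  intro δ hδ
  by_contra hcon
  push_neg at hcon
  choose xf hxf sf hsf hviol using hcon
  set X : ℕ → ℝ := fun n => xf (n : ℝ) with hX
  set S : ℕ → ℝ := fun n => sf (n : ℝ) with hS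
  have hXge : ∀ n : ℕ, (n : ℝ) ≤ X n := fun n => hxf _
  have hXtop : Tendsto X atTop atTop :=
    tendsto_atTop_mono hXge tendsto_natCast_atTop_atTop
  have hS01 : ∀ n, S n ∈ Set.Icc (0:ℝ) 1 := fun n => hsf _
  have hXStop : Tendsto (fun n => X n + S n) atTop atTop := by
    apply tendsto_atTop_mono (fun n => ?_) hXtop
    have := (hS01 n).1; linarith
  have habs : ∀ s : ℝ, ∀ᶠ x in atTop, |h (x + s) - h x| ≤ δ/3 := by
    intro s
    have := NormedAddCommGroup.tendsto_nhds_zero.mp (hconv s) (δ/3) (by positivity)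
    filter_upwards [this] with x hx
    simpa [Real.norm_eq_abs] using hx.le
  -- the sets
  set E : ℕ → Set ℝ := fun n =>
    Icc (0:ℝ) 2 ∩ ⋂ (m : ℕ) (_ : n ≤ m), {u | |h (X m + u) - h (X m)| ≤ δ/3} with hE
  set F : ℕ → Set ℝ := fun n =>
    Icc (0:ℝ) 1 ∩ ⋂ (m : ℕ) (_ : n ≤ m), {u | |h (X m + S m + u) - h (X m + S m)| ≤ δ/3} with hF
  have hmem : ∀ (c : ℝ), Measurable fun u : ℝ => h (c + u) :=
    fun c => hmeas.comp (measurable_const.add measurable_id)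
  have hEmeas : ∀ n, MeasurableSet (E n) := by
    intro n
    refine measurableSet_Icc.inter (MeasurableSet.iInter fun m => MeasurableSet.iInter fun _ => ?_)
    exact measurableSet_le (((hmem (X m)).sub measurable_const).abs) measurable_const
  have hFmeas : ∀ n, MeasurableSet (F n) := by
    intro n
    refine measurableSet_Icc.inter (MeasurableSet.iInter fun m => MeasurableSet.iInter fun _ => ?_)
    exact measurableSet_le (((hmem (X m + S m)).sub measurable_const).abs) measurable_const
  have hEmono : Monotone E := by
    intro a b hab u hu
    obtain ⟨h1, h2⟩ := hu
    simp only [Set.mem_iInter] at h2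
    exact ⟨h1, by simp only [Set.mem_iInter]; exact fun m hm => h2 m (hab.trans hm)⟩
  have hFmono : Monotone F := by
    intro a b hab u hu
    obtain ⟨h1, h2⟩ := hu
    simp only [Set.mem_iInter] at h2
    exact ⟨h1, by simp only [Set.mem_iInter]; exact fun m hm => h2 m (hab.trans hm)⟩
  have hEunion : (⋃ n, E n) = Icc (0:ℝ) 2 := by
    apply Set.Subset.antisymm
    · exact Set.iUnion_subset fun n => Set.inter_subset_left
    · intro u hu
      obtain ⟨R, hR⟩ := (habs u).exists_forall_of_atTop
      obtain ⟨n, hn⟩ := (hXtop.eventually_ge_atTop R).exists_forall_of_atTop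
      refine Set.mem_iUnion.mpr ⟨n, hu, ?_⟩
      simp only [Set.mem_iInter]
      exact fun m hm => hR _ (hn m hm)
  have hFunion : (⋃ n, F n) = Icc (0:ℝ) 1 := by
    apply Set.Subset.antisymm
    · exact Set.iUnion_subset fun n => Set.inter_subset_left
    · intro u hu
      obtain ⟨R, hR⟩ := (habs u).exists_forall_of_atTop
      obtain ⟨n, hn⟩ := (hXStop.eventually_ge_atTop R).exists_forall_of_atTop
      refine Set.mem_iUnion.mpr ⟨n, hu, ?_⟩
      simp only [Set.mem_iInter]
      exact fun m hm => hR _ (hn m hm)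
  have hEt : Tendsto (volume ∘ E) atTop (𝓝 (ENNReal.ofReal 2)) := by
    have := tendsto_measure_iUnion_atTop (μ := volume) hEmono
    rwa [hEunion, Real.volume_Icc, show (2:ℝ) - 0 = 2 by norm_num] at this
  have hFt : Tendsto (volume ∘ F) atTop (𝓝 (ENNReal.ofReal 1)) := by
    have := tendsto_measure_iUnion_atTop (μ := volume) hFmono
    rwa [hFunion, Real.volume_Icc, show (1:ℝ) - 0 = 1 by norm_num] at this
  have hEev := hEt.eventually_const_lt
    (ENNReal.ofReal_lt_ofReal_iff (by norm_num)|>.mpr (by norm_num : (7/4:ℝ) < 2))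
  have hFev := hFt.eventually_const_lt
    (ENNReal.ofReal_lt_ofReal_iff (by norm_num)|>.mpr (by norm_num : (3/4:ℝ) < 1))
  obtain ⟨n, hEn, hFn⟩ := (hEev.and hFev).exists
  simp only [Function.comp] at hEn hFn
  -- the translated set G
  set G : Set ℝ := Icc (0:ℝ) 1 ∩ (fun u => S n + u) ⁻¹' (E n) with hG
  have hGsub : Icc (0:ℝ) 1 \ G ⊆ (fun u => S n + u) ⁻¹' (Icc (0:ℝ) 2 \ E n) := by
    intro u hu
    obtain ⟨hu1, hu2⟩ := hu
    have hSn := hS01 n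
    have hmem2 : S n + u ∈ Icc (0:ℝ) 2 :=
      ⟨by linarith [hu1.1, hSn.1], by linarith [hu1.2, hSn.2]⟩
    exact ⟨hmem2, fun hmem => hu2 ⟨hu1, hmem⟩⟩
  have hdiffle : volume (Icc (0:ℝ) 2 \ E n) ≤ ENNReal.ofReal (1/4) := by
    have h1 : volume (Icc (0:ℝ) 2 \ E n) = volume (Icc (0:ℝ) 2) - volume (E n) :=
      measure_diff Set.inter_subset_left (hEmeas n).nullMeasurableSet
        (ne_top_of_le_ne_top (by simp) (measure_mono (Set.inter_subset_left : E n ⊆ Icc (0:ℝ) 2)))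
    rw [h1, Real.volume_Icc, show (2:ℝ) - 0 = 2 by norm_num]
    refine le_trans (tsub_le_tsub_left hEn.le _) ?_
    rw [← ENNReal.ofReal_sub _ (by norm_num)]
    exact le_of_eq (by norm_num)
  have hGvol : ENNReal.ofReal (3/4) ≤ volume G := by
    have h2 : volume (Icc (0:ℝ) 1) ≤ volume G + volume (Icc (0:ℝ) 1 \ G) := by
      refine le_trans (measure_mono ?_) (measure_union_le _ _)
      intro u hu
      by_cases hx : u ∈ G
      · exact Or.inl hx
      · exact Or.inr ⟨hu, hx⟩
    have h3 : volume ((fun u => S n + u) ⁻¹' (Icc (0:ℝ) 2 \ E n)) = volume (Icc (0:ℝ) 2 \ E n) :=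
      measure_preimage_add _ _ _
    have h4 : volume (Icc (0:ℝ) 1 \ G) ≤ ENNReal.ofReal (1/4) :=
      le_trans (measure_mono hGsub) (le_trans h3.le hdiffle)
    rw [Real.volume_Icc, show (1:ℝ) - 0 = 1 by norm_num] at h2
    have h5 : ENNReal.ofReal 1 ≤ volume G + ENNReal.ofReal (1/4) :=
      le_trans h2 (add_le_add_right h4 _)
    have h6 := tsub_le_iff_right.mpr h5
    refine le_trans (le_of_eq ?_) h6
    rw [← ENNReal.ofReal_sub _ (by norm_num)]
    norm_num
  -- G and F n intersect
  have hGFsub : G ∪ F n ⊆ Icc (0:ℝ) 1 :=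
    Set.union_subset Set.inter_subset_left Set.inter_subset_left
  have hinter : (G ∩ F n).Nonempty := by
    refine nonempty_of_measure_ne_zero (μ := volume) (fun h0 => ?_)
    have hie := measure_union_add_inter (μ := volume) G (hFmeas n)
    rw [h0, add_zero] at hie
    have hlt : ENNReal.ofReal 1 < volume (G ∪ F n) := by
      rw [hie]
      calc ENNReal.ofReal 1 = ENNReal.ofReal (3/4) + ENNReal.ofReal (1/4) := by
            rw [← ENNReal.ofReal_add (by norm_num) (by norm_num)]; norm_num
      _ < volume G + volume (F n) := by
            refine ENNReal.add_lt_add_of_le_of_lt (by simp) hGvol ?_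
            exact lt_of_lt_of_le (ENNReal.ofReal_lt_ofReal_iff (by norm_num)|>.mpr
              (by norm_num : (1/4:ℝ) < 3/4)) hFn.le
    have hle : volume (G ∪ F n) ≤ ENNReal.ofReal 1 := by
      refine le_trans (measure_mono hGFsub) ?_
      rw [Real.volume_Icc]; norm_num
    exact absurd (hlt.trans_le hle) (lt_irrefl _)
  obtain ⟨u, huG, huF⟩ := hinter
  have huE : S n + u ∈ E n := huG.2
  have hEbound : |h (X n + (S n + u)) - h (X n)| ≤ δ/3 := by
    have := huE.2
    simp only [Set.mem_iInter] at this
    exact this n le_rfl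
  have hFbound : |h (X n + S n + u) - h (X n + S n)| ≤ δ/3 := by
    have := huF.2
    simp only [Set.mem_iInter] at this
    exact this n le_rfl
  have hkey : |h (X n + S n) - h (X n)| ≤ 2*δ/3 := by
    rw [← add_assoc] at hEbound
    calc |h (X n + S n) - h (X n)|
        = |(h (X n + S n + u) - h (X n)) - (h (X n + S n + u) - h (X n + S n))| := by ring_nf
      _ ≤ |h (X n + S n + u) - h (X n)| + |h (X n + S n + u) - h (X n + S n)| := abs_sub _ _
      _ ≤ δ/3 + δ/3 := add_le_add hEbound hFbound
      _ = 2*δ/3 := by ring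
  have := hviol (n : ℝ)
  change δ < |h (X n + S n) - h (X n)| at this
  linarith

private lemma my_lin_bound (h : ℝ → ℝ) (hmeas : Measurable h)
    (hconv : ∀ s : ℝ, Tendsto (fun x => h (x + s) - h x) atTop (𝓝 0)) :
    ∀ ε > (0:ℝ), ∀ᶠ x in atTop, h x ≤ ε * x := by
  intro ε hε
  obtain ⟨N, hN⟩ := my_uct h hmeas hconv (ε/2) (by positivity)
  have hstep : ∀ k : ℕ, h (N + k) ≤ h N + (ε/2) * k := by
    intro k
    induction k with
    | zero => simp
    | succ k ih =>
      have h1 := hN (N + k) (le_add_of_nonneg_right k.cast_nonneg) 1 ⟨zero_le_one, le_rfl⟩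
      have h2 := (abs_le.mp h1).2
      push_cast
      rw [show N + ((k:ℝ) + 1) = (N + (k:ℝ)) + 1 from by ring]
      push_cast at ih
      linarith
  have hbound : ∀ x ≥ N, h x ≤ h N + (ε/2) * (x - N + 1) := by
    intro x hx
    set k : ℕ := ⌊x - N⌋₊ with hk
    have hk1 : (k : ℝ) ≤ x - N := Nat.floor_le (by linarith)
    have hk2 : x - N < k + 1 := Nat.lt_floor_add_one _
    have hs : x - (N + k) ∈ Set.Icc (0:ℝ) 1 := ⟨by linarith, by linarith⟩
    have h1 := hN (N + k) (le_add_of_nonneg_right (by positivity)) _ hs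
    have h2 : N + (k:ℝ) + (x - (N + k)) = x := by ring
    rw [h2] at h1
    have h3 := hstep k
    have := abs_le.mp h1
    nlinarith [this.1, this.2]
  have hNε : ∀ᶠ x in atTop, h N + (ε/2) * (x - N + 1) ≤ ε * x := by
    filter_upwards [eventually_ge_atTop ((h N + (ε/2)*(1 - N)) / (ε/2))] with x hx
    have : h N + (ε/2)*(1 - N) ≤ (ε/2) * x := by
      rw [div_le_iff₀ (by positivity)] at hx; linarith [hx]
    linarith
  filter_upwards [eventually_ge_atTop N, hNε] with x h1 h2
  exact le_trans (hbound x h1) h2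

private lemma my_sv_bound (M : ℝ → ℝ) (hM : Measurable M) (hpos : ∀ᶠ u in atTop, 0 < M u)
    (hsv : ∀ t > (0:ℝ), Tendsto (fun u => M (t * u) / M u) atTop (𝓝 1)) :
    ∀ ε > (0:ℝ), ∀ᶠ u in atTop, M u ≤ u ^ ε := by
  intro ε hε
  set h : ℝ → ℝ := fun x => Real.log (M (Real.exp x)) with hh
  have hmeas : Measurable h := Real.measurable_log.comp (hM.comp Real.measurable_exp)
  have hconv : ∀ s : ℝ, Tendsto (fun x => h (x + s) - h x) atTop (𝓝 0) := by
    intro s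
    have hratio : Tendsto (fun x => M (Real.exp s * Real.exp x) / M (Real.exp x)) atTop (𝓝 1) :=
      (hsv (Real.exp s) (Real.exp_pos s)).comp Real.tendsto_exp_atTop
    have hlog : Tendsto (fun x => Real.log (M (Real.exp s * Real.exp x) / M (Real.exp x)))
        atTop (𝓝 0) := by
      have := ((Real.continuousAt_log one_ne_zero).tendsto).comp hratio
      rwa [Real.log_one] at this
    have hev1 : ∀ᶠ x in atTop, 0 < M (Real.exp x) := Real.tendsto_exp_atTop.eventually hpos
    have hev2 : ∀ᶠ x in atTop, 0 < M (Real.exp s * Real.exp x) :=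
      (Real.tendsto_exp_atTop.const_mul_atTop (Real.exp_pos s)).eventually hpos
    refine hlog.congr' ?_
    filter_upwards [hev1, hev2] with x h1 h2
    rw [Real.log_div (ne_of_gt h2) (ne_of_gt h1)]
    simp only [hh]
    rw [Real.exp_add, mul_comm (Real.exp x) (Real.exp s)]
  have hlin := my_lin_bound h hmeas hconv ε hε
  have hloglin : ∀ᶠ u in atTop, h (Real.log u) ≤ ε * Real.log u :=
    Real.tendsto_log_atTop.eventually hlin
  filter_upwards [hpos, eventually_gt_atTop 0, hloglin] with u hMu hu hlu
  have h1 : h (Real.log u) = Real.log (M u) := by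
    simp only [hh, Real.exp_log hu]
  rw [h1] at hlu
  calc M u = Real.exp (Real.log (M u)) := (Real.exp_log hMu).symm
    _ ≤ Real.exp (ε * Real.log u) := Real.exp_le_exp.mpr hlu
    _ = u ^ ε := by rw [Real.rpow_def_of_pos hu, mul_comm]

private lemma my_tail_bigO {Ω : Type*} [MeasurableSpace Ω] (μ : Measure Ω)
    [IsProbabilityMeasure μ] (X : Ω → ℝ) (L : ℝ → ℝ) (α p : ℝ) (hp : 0 < p)
    (hLpos : ∀ u > 0, 0 < L u)
    (hsv : ∀ t > (0:ℝ), Tendsto (fun u => L (t * u) / L u) atTop (𝓝 1))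
    (htail : Tendsto (fun u : ℝ => (μ {ω | X ω > u}).toReal /
        (L u * u ^ α * Real.exp (-u ^ 2 / (2 * p ^ 2)))) atTop (𝓝 1))
    (ε : ℝ) (hε : 0 < ε) :
    (fun x : ℝ => (μ {ω | X ω > 1.1 * p * x}).toReal) =O[atTop]
      (fun x : ℝ => x ^ (α + ε) * Real.exp (-(1.1 : ℝ) ^ 2 * x ^ 2 / 2)) := by
  set T : ℝ → ℝ := fun u => (μ {ω | X ω > u}).toReal with hT
  have hTanti : Antitone T := by
    intro u v huv
    exact ENNReal.toReal_mono (measure_ne_top μ _)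
      (measure_mono (fun ω hω => lt_of_le_of_lt huv hω))
  have hTmeas : Measurable T := hTanti.measurable
  set D : ℝ → ℝ := fun u => u ^ α * Real.exp (-u ^ 2 / (2 * p ^ 2)) with hD
  have hDmeas : Measurable D := by fun_prop
  have hDpos : ∀ u : ℝ, 0 < u → 0 < D u := fun u hu =>
    mul_pos (Real.rpow_pos_of_pos hu α) (Real.exp_pos _)
  set M : ℝ → ℝ := fun u => T u / D u with hM
  have hMmeas : Measurable M := hTmeas.div hDmeas
  have hML : Tendsto (fun u => M u / L u) atTop (𝓝 1) := by
    refine htail.congr (fun u => ?_)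
    simp only [hM, hT, hD]
    rw [div_div]
    ring_nf
  have hMpos : ∀ᶠ u in atTop, 0 < M u := by
    have h1 := hML.eventually_const_lt (by norm_num : (1/2:ℝ) < 1)
    filter_upwards [h1, eventually_gt_atTop 0] with u hu hu0
    have hLu := hLpos u hu0
    have : M u = (M u / L u) * L u := (div_mul_cancel₀ _ (ne_of_gt hLu)).symm
    rw [this]
    exact mul_pos (lt_trans (by norm_num) hu) hLu
  have hMsv : ∀ t > (0:ℝ), Tendsto (fun u => M (t * u) / M u) atTop (𝓝 1) := by
    intro t ht
    have htmul : Tendsto (fun u : ℝ => t * u) atTop atTop := tendsto_id.const_mul_atTop ht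
    have hA : Tendsto (fun u => M (t * u) / L (t * u)) atTop (𝓝 1) := hML.comp htmul
    have hB := hsv t ht
    have hC : Tendsto (fun u => L u / M u) atTop (𝓝 1) := by
      have := hML.inv₀ one_ne_zero
      simp only [inv_div, inv_one] at this
      exact this
    have hprod := (hA.mul hB).mul hC
    rw [show (1:ℝ) * 1 * 1 = 1 by norm_num] at hprod
    refine hprod.congr' ?_
    filter_upwards [eventually_gt_atTop 0] with u hu0
    have htu : (0:ℝ) < t * u := mul_pos ht hu0
    have hLtu := (hLpos _ htu).ne'
    have hLu := (hLpos _ hu0).ne'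
    rw [div_mul_div_comm, div_mul_div_comm,
      show M (t * u) * L (t * u) * L u = (L (t * u) * L u) * M (t * u) by ring,
      show L (t * u) * L u * M u = (L (t * u) * L u) * M u by ring,
      mul_div_mul_left _ _ (mul_ne_zero hLtu hLu)]
  have hMb := my_sv_bound M hMmeas hMpos hMsv ε hε
  have hc : (0:ℝ) < 1.1 * p := by positivity
  have hcx : Tendsto (fun x : ℝ => 1.1 * p * x) atTop atTop := tendsto_id.const_mul_atTop hc
  rw [isBigO_iff]
  refine ⟨(1.1 * p) ^ (α + ε), ?_⟩
  filter_upwards [hcx.eventually hMb, eventually_gt_atTop 0] with x hMx hx0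
  have hu0 : (0:ℝ) < 1.1 * p * x := by positivity
  have hTeq : T (1.1 * p * x) = M (1.1 * p * x) * D (1.1 * p * x) :=
    (div_mul_cancel₀ _ (ne_of_gt (hDpos _ hu0))).symm
  have hTle : T (1.1 * p * x) ≤ (1.1 * p * x) ^ ε * D (1.1 * p * x) := by
    rw [hTeq]
    exact mul_le_mul_of_nonneg_right hMx (le_of_lt (hDpos _ hu0))
  have hexp : Real.exp (-(1.1 * p * x) ^ 2 / (2 * p ^ 2)) =
      Real.exp (-(1.1:ℝ) ^ 2 * x ^ 2 / 2) := by
    congr 1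
    field_simp
  have hrw : (1.1 * p * x) ^ ε * D (1.1 * p * x) =
      (1.1 * p) ^ (α + ε) * (x ^ (α + ε) * Real.exp (-(1.1:ℝ) ^ 2 * x ^ 2 / 2)) := by
    simp only [hD]
    rw [hexp, ← mul_assoc, ← Real.rpow_add hu0,
      show (1.1 * p * x) = (1.1 * p) * x from rfl,
      Real.mul_rpow (le_of_lt hc) (le_of_lt hx0), add_comm ε α]
    ring
  have hnorm1 : ‖T (1.1 * p * x)‖ = T (1.1 * p * x) :=
    Real.norm_of_nonneg ENNReal.toReal_nonneg
  have hnorm2 : ‖x ^ (α + ε) * Real.exp (-(1.1:ℝ) ^ 2 * x ^ 2 / 2)‖ =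
      x ^ (α + ε) * Real.exp (-(1.1:ℝ) ^ 2 * x ^ 2 / 2) :=
    Real.norm_of_nonneg (le_of_lt (mul_pos (Real.rpow_pos_of_pos hx0 _) (Real.exp_pos _)))
  rw [hnorm1, hnorm2]
  calc T (1.1 * p * x) ≤ (1.1 * p * x) ^ ε * D (1.1 * p * x) := hTle
    _ = (1.1 * p) ^ (α + ε) * (x ^ (α + ε) * Real.exp (-(1.1:ℝ) ^ 2 * x ^ 2 / 2)) := hrw

end Helpers

/-- The two boundary-region bounds in the proof of Lemma 8.6: with c = 1.1,
P(X₁+X₂ > x, X₂ ≤ (1−cp₁)x) = O(x^{α₁+ε} e^{−c²x²/2}) and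
P(X₁+X₂ > x, X₂ > cp₂x) = O(x^{α₂+ε} e^{−c²x²/2}). -/
theorem lemma86_boundary_bounds {Ω : Type*} [MeasurableSpace Ω] (μ : Measure Ω)
    [IsProbabilityMeasure μ] (X₁ X₂ : Ω → ℝ)
    (hm₁ : Measurable X₁) (hm₂ : Measurable X₂)
    (hind : IndepFun X₁ X₂ μ)
    (L₁ L₂ : ℝ → ℝ) (α₁ α₂ p₁ p₂ : ℝ) (hp₁ : 0 < p₁) (hp₂ : 0 < p₂)
    (hp12 : p₁ ≤ p₂) (hpsum : p₁ ^ 2 + p₂ ^ 2 = 1)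
    (hL₁pos : ∀ u > 0, 0 < L₁ u) (hL₂pos : ∀ u > 0, 0 < L₂ u)
    (hsv₁ : ∀ t > 0, Tendsto (fun u => L₁ (t * u) / L₁ u) atTop (𝓝 1))
    (hsv₂ : ∀ t > 0, Tendsto (fun u => L₂ (t * u) / L₂ u) atTop (𝓝 1))
    (htail₁ : Tendsto (fun u : ℝ => (μ {ω | X₁ ω > u}).toReal /
        (L₁ u * u ^ α₁ * Real.exp (-u ^ 2 / (2 * p₁ ^ 2)))) atTop (𝓝 1))
    (htail₂ : Tendsto (fun u : ℝ => (μ {ω | X₂ ω > u}).toReal /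
        (L₂ u * u ^ α₂ * Real.exp (-u ^ 2 / (2 * p₂ ^ 2)))) atTop (𝓝 1)) :
    ∀ ε > 0,
      (fun x : ℝ => (μ {ω | X₁ ω + X₂ ω > x ∧ X₂ ω ≤ (1 - 1.1 * p₁) * x}).toReal)
        =O[atTop] (fun x : ℝ => x ^ (α₁ + ε) * Real.exp (-(1.1 : ℝ) ^ 2 * x ^ 2 / 2)) ∧
      (fun x : ℝ => (μ {ω | X₁ ω + X₂ ω > x ∧ X₂ ω > 1.1 * p₂ * x}).toReal)
        =O[atTop] (fun x : ℝ => x ^ (α₂ + ε) * Real.exp (-(1.1 : ℝ) ^ 2 * x ^ 2 / 2)) := by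
  intro ε hε
  constructor
  · have key := my_tail_bigO μ X₁ L₁ α₁ p₁ hp₁ hL₁pos hsv₁ htail₁ ε hε
    refine IsBigO.trans ?_ key
    refine isBigO_of_le atTop (fun x => ?_)
    rw [Real.norm_of_nonneg ENNReal.toReal_nonneg, Real.norm_of_nonneg ENNReal.toReal_nonneg]
    refine ENNReal.toReal_mono (measure_ne_top μ _) (measure_mono ?_)
    rintro ω ⟨h1, h2⟩
    show X₁ ω > 1.1 * p₁ * x
    nlinarith
  · have key := my_tail_bigO μ X₂ L₂ α₂ p₂ hp₂ hL₂pos hsv₂ htail₂ ε hε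
    refine IsBigO.trans ?_ key
    refine isBigO_of_le atTop (fun x => ?_)
    rw [Real.norm_of_nonneg ENNReal.toReal_nonneg, Real.norm_of_nonneg ENNReal.toReal_nonneg]
    refine ENNReal.toReal_mono (measure_ne_top μ _) (measure_mono ?_)
    rintro ω ⟨h1, h2⟩
    exact h2
end
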